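/- Two sub-σ-fields x, y of a probability space are independent if and only if the conditional expectation projections Q_x, Q_y commute and x ∧ y is the trivial σ-field (equivalently, Q_x Q_y = Q_y Q_x = Q₀, the projection onto constants). -/

import Mathlib

open MeasureTheory Filter Topology

set_option synthInstance.maxHeartbeats 400000
noncomputable section

variable {Ω : Type*}

/-- The trivial σ-field augmented with all null sets: the least element `0` of `Λ`. -/
def nullSF {m0 : MeasurableSpace Ω} (μ : Measure Ω) : MeasurableSpace Ω :=
  MeasurableSpace.generateFrom {s : Set Ω | μ s = 0}

/-- Membership in `Λ`: a sub-σ-field of `m0` containing all null sets. -/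
def InLam {m0 : MeasurableSpace Ω} (μ : Measure Ω) (m : MeasurableSpace Ω) : Prop :=
  m ≤ m0 ∧ nullSF μ ≤ m

set_option synthInstance.maxHeartbeats 400000 in
/-- The type `L₂` subspace `L₂(m)` of `H = L₂(Ω, F, P)`. -/
abbrev L2S {m0 : MeasurableSpace Ω} (μ : Measure Ω) (m : MeasurableSpace Ω) :
    Submodule ℝ (Lp ℝ 2 μ) :=
  @lpMeas Ω ℝ ℝ _ _ _ m m0 2 μ

/-- The orthogonal projection of `H = L₂(Ω, F, P)` onto `L₂(m)`. -/
def Q {m0 : MeasurableSpace Ω} (μ : Measure Ω) (m : MeasurableSpace Ω) :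
    Lp ℝ 2 μ →L[ℝ] Lp ℝ 2 μ :=
  letI := Classical.dec (m ≤ m0)
  if hm : m ≤ m0 then
    haveI : Fact (m ≤ m0) := ⟨hm⟩
    (L2S μ m).subtypeL.comp (Submodule.orthogonalProjectionOnto (L2S μ m))
  else 0

/-- Strong operator convergence of the projections `Q (x n)` to `Q l`. -/
def SOTLim {m0 : MeasurableSpace Ω} (μ : Measure Ω) (x : ℕ → MeasurableSpace Ω)
    (l : MeasurableSpace Ω) : Prop :=
  ∀ f : Lp ℝ 2 μ, Tendsto (fun n => Q μ (x n) f) atTop (𝓝 (Q μ l f))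

/-- Independence of two sub-σ-fields. -/
def IndepSF {m0 : MeasurableSpace Ω} (μ : Measure Ω) (x y : MeasurableSpace Ω) : Prop :=
  ∀ s t : Set Ω, MeasurableSet[x] s → MeasurableSet[y] t → μ (s ∩ t) = μ s * μ t

open ProbabilityTheory
open scoped ENNReal

section Aux

variable {m m0 : MeasurableSpace Ω} {μ : Measure Ω}

lemma Q_apply (hm : m ≤ m0) (f : Lp ℝ 2 μ) :
    Q μ m f = (condExpL2 ℝ ℝ hm f : Lp ℝ 2 μ) := by
  simp only [Q, dif_pos hm]
  rfl

lemma Q_mem (hm : m ≤ m0) (f : Lp ℝ 2 μ) : Q μ m f ∈ L2S μ m := by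
  rw [Q_apply hm]
  exact (condExpL2 ℝ ℝ hm f).2

lemma Q_fix (hm : m ≤ m0) {f : Lp ℝ 2 μ} (hf : f ∈ L2S μ m) : Q μ m f = f := by
  rw [Q_apply hm]
  haveI : Fact (m ≤ m0) := ⟨hm⟩
  exact congrArg Subtype.val
    (Submodule.orthogonalProjectionOnto_mem_subspace_eq_self (K := L2S μ m) ⟨f, hf⟩)

lemma Q_inner (hm : m ≤ m0) (f g : Lp ℝ 2 μ) :
    (inner ℝ (Q μ m f) g : ℝ) = inner ℝ f (Q μ m g) := by
  rw [Q_apply hm, Q_apply hm]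
  exact inner_condExpL2_left_eq_right hm

lemma Q_ae_condexp [IsFiniteMeasure μ] (hm : m ≤ m0) (f : Lp ℝ 2 μ) :
    (Q μ m f : Ω → ℝ) =ᵐ[μ] μ[(f : Ω → ℝ)|m] := by
  have hint : Integrable (f : Ω → ℝ) μ :=
    integrableOn_univ.mp
      (integrableOn_Lp_of_measure_ne_top f fact_one_le_two_ennreal.elim (measure_ne_top μ _))
  refine ae_eq_condExp_of_forall_setIntegral_eq hm hint ?_ ?_ ?_
  · intro s _ hμs
    exact integrableOn_Lp_of_measure_ne_top _ fact_one_le_two_ennreal.elim hμs.ne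
  · intro s hs hμs
    rw [Q_apply hm]
    exact integral_condExpL2_eq hm f hs hμs.ne
  · rw [Q_apply hm]
    exact aestronglyMeasurable_condExpL2 hm f

lemma meas_nullSF {s : Set Ω} (hs : MeasurableSet[nullSF μ] s) : μ s = 0 ∨ μ sᶜ = 0 := by
  induction s, hs using MeasurableSpace.generateFrom_induction with
  | hC t ht _ => exact Or.inl ht
  | empty => exact Or.inl measure_empty
  | compl t ht h =>
    rcases h with h | h
    · exact Or.inr (by rwa [compl_compl])
    · exact Or.inl h
  | iUnion f hf h =>
    by_cases hall : ∀ n, μ (f n) = 0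
    · exact Or.inl (measure_iUnion_null hall)
    · push_neg at hall
      obtain ⟨n, hn⟩ := hall
      have hfc : μ (f n)ᶜ = 0 := (h n).resolve_left hn
      refine Or.inr (measure_mono_null ?_ hfc)
      exact Set.compl_subset_compl.mpr (Set.subset_iUnion f n)

lemma indep_nullSF [IsProbabilityMeasure μ] (h0 : nullSF μ ≤ m0) :
    Indep m0 (nullSF μ) μ := by
  rw [Indep_iff]
  intro t1 t2 _ h2
  rcases meas_nullSF h2 with h | h
  · rw [measure_mono_null Set.inter_subset_right h, h, mul_zero]
  · have ht2 : μ t2 = 1 := by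
      refine le_antisymm prob_le_one ?_
      calc (1 : ℝ≥0∞) = μ Set.univ := (measure_univ).symm
        _ ≤ μ (t2 ∪ t2ᶜ) := measure_mono (by simp)
        _ ≤ μ t2 + μ t2ᶜ := measure_union_le _ _
        _ = μ t2 := by rw [h, add_zero]
    have le1 : μ t1 ≤ μ (t1 ∩ t2) := by
      calc μ t1 ≤ μ ((t1 ∩ t2) ∪ t2ᶜ) := by
            refine measure_mono fun a ha => ?_
            by_cases h2 : a ∈ t2
            · exact Or.inl ⟨ha, h2⟩
            · exact Or.inr h2
        _ ≤ μ (t1 ∩ t2) + μ t2ᶜ := measure_union_le _ _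
        _ = μ (t1 ∩ t2) := by rw [h, add_zero]
    rw [le_antisymm (measure_mono Set.inter_subset_left) le1, ht2, mul_one]

lemma Q0_ae [IsProbabilityMeasure μ] (h0 : nullSF μ ≤ m0) (f : Lp ℝ 2 μ) :
    (Q μ (nullSF μ) f : Ω → ℝ) =ᵐ[μ] fun _ => ∫ a, f a ∂μ := by
  haveI : SigmaFinite (μ.trim h0) := inferInstance
  exact (Q_ae_condexp h0 f).trans
    (condExp_indep_eq le_rfl h0 (Lp.stronglyMeasurable f) (indep_nullSF h0))

lemma comp_eq_Q0 [IsProbabilityMeasure μ] {x y : MeasurableSpace Ω}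
    (hx : InLam μ x) (hy : InLam μ y) (h : IndepSF μ x y) :
    (Q μ x).comp (Q μ y) = Q μ (nullSF μ) := by
  have h0 : nullSF μ ≤ m0 := hx.2.trans hx.1
  haveI : SigmaFinite (μ.trim hx.1) := inferInstance
  have hind : Indep y x μ := by
    rw [Indep_iff]
    intro t1 t2 h1 h2
    rw [Set.inter_comm, h t2 t1 h2 h1, mul_comm]
  refine ContinuousLinearMap.ext fun f => Lp.ext ?_
  obtain ⟨g, hg, hgeq⟩ := mem_lpMeas_iff_aestronglyMeasurable.mp (Q_mem hy.1 f)
  have h1 : ((Q μ x).comp (Q μ y) f : Ω → ℝ) =ᵐ[μ] fun _ => ∫ a, g a ∂μ :=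
    ((Q_ae_condexp hx.1 (Q μ y f)).trans (condExp_congr_ae hgeq)).trans
      (condExp_indep_eq hy.1 hx.1 hg hind)
  have h2 : ∫ a, g a ∂μ = ∫ a, f a ∂μ := by
    rw [← integral_congr_ae hgeq, Q_apply hy.1]
    have := integral_condExpL2_eq (E' := ℝ) (𝕜 := ℝ) hy.1 f MeasurableSet.univ (measure_ne_top μ _)
    simpa [setIntegral_univ] using this
  rw [h2] at h1
  exact h1.trans (Q0_ae h0 f).symm

lemma inner_ind_setIntegral [IsProbabilityMeasure μ] {s : Set Ω}
    (hsm : MeasurableSet[m0] s) (g : Lp ℝ 2 μ) :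
    (inner ℝ (indicatorConstLp 2 hsm (measure_ne_top μ s) (1 : ℝ)) g : ℝ) = ∫ ω in s, g ω ∂μ :=
  L2.inner_indicatorConstLp_one hsm (measure_ne_top μ s) g

lemma setIntegral_ind [IsProbabilityMeasure μ] {s t : Set Ω}
    (hsm : MeasurableSet[m0] s) (htm : MeasurableSet[m0] t) :
    ∫ ω in s, (indicatorConstLp (μ := μ) 2 htm (measure_ne_top μ t) (1 : ℝ)) ω ∂μ
      = (μ (t ∩ s)).toReal := by
  rw [setIntegral_indicatorConstLp hsm htm (measure_ne_top μ t) (1 : ℝ)]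
  simp [measureReal_def]

lemma integral_ind [IsProbabilityMeasure μ] {t : Set Ω} (htm : MeasurableSet[m0] t) :
    ∫ ω, (indicatorConstLp (μ := μ) 2 htm (measure_ne_top μ t) (1 : ℝ)) ω ∂μ
      = (μ t).toReal := by
  rw [integral_indicatorConstLp htm (measure_ne_top μ t) (1 : ℝ)]
  simp [measureReal_def]

lemma inner_ind_Q0 [IsProbabilityMeasure μ] (h0 : nullSF μ ≤ m0) {s : Set Ω}
    (hsm : MeasurableSet[m0] s) (g : Lp ℝ 2 μ) :
    (inner ℝ (indicatorConstLp 2 hsm (measure_ne_top μ s) (1 : ℝ)) (Q μ (nullSF μ) g) : ℝ)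
      = (μ s).toReal * ∫ ω, g ω ∂μ := by
  rw [inner_ind_setIntegral hsm (Q μ (nullSF μ) g),
    setIntegral_congr_ae hsm ((Q0_ae h0 g).mono fun ω hω _ => hω), setIntegral_const]
  simp [measureReal_def]

lemma indep_of_comp_eq [IsProbabilityMeasure μ] {x y : MeasurableSpace Ω}
    (hx : InLam μ x) (hy : InLam μ y)
    (h : (Q μ x).comp (Q μ y) = Q μ (nullSF μ)) : IndepSF μ x y := by
  have h0 : nullSF μ ≤ m0 := hx.2.trans hx.1
  intro s t hs ht
  have hsm : MeasurableSet[m0] s := hx.1 s hs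
  have htm : MeasurableSet[m0] t := hy.1 t ht
  set a : Lp ℝ 2 μ := indicatorConstLp 2 hsm (measure_ne_top μ s) (1 : ℝ) with ha
  set b : Lp ℝ 2 μ := indicatorConstLp 2 htm (measure_ne_top μ t) (1 : ℝ) with hb
  have hQyb : Q μ y b = b := Q_fix hy.1 (mem_lpMeas_indicatorConstLp hy.1 ht (measure_ne_top μ t))
  have hQxa : Q μ x a = a := Q_fix hx.1 (mem_lpMeas_indicatorConstLp hx.1 hs (measure_ne_top μ s))
  have lhs : (inner ℝ a ((Q μ x).comp (Q μ y) b) : ℝ) = (μ (s ∩ t)).toReal := by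
    rw [ContinuousLinearMap.comp_apply, hQyb, ← Q_inner hx.1, hQxa, ha,
      inner_ind_setIntegral hsm b, hb, setIntegral_ind hsm htm, Set.inter_comm t s]
  have rhs : (inner ℝ a (Q μ (nullSF μ) b) : ℝ) = (μ s).toReal * (μ t).toReal := by
    rw [ha, inner_ind_Q0 h0 hsm b, hb, integral_ind htm]
  have key : (μ (s ∩ t)).toReal = (μ s).toReal * (μ t).toReal := by
    calc (μ (s ∩ t)).toReal = (inner ℝ a ((Q μ x).comp (Q μ y) b) : ℝ) := lhs.symm
      _ = (inner ℝ a (Q μ (nullSF μ) b) : ℝ) := by rw [h]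
      _ = (μ s).toReal * (μ t).toReal := rhs
  rw [← ENNReal.toReal_eq_toReal_iff' (measure_ne_top μ _)
    (ENNReal.mul_ne_top (measure_ne_top μ s) (measure_ne_top μ t)), ENNReal.toReal_mul]
  exact key

lemma aesm_inf {x y : MeasurableSpace Ω} (hy2 : nullSF μ ≤ y) {g : Ω → ℝ}
    (hgx : AEStronglyMeasurable[x] g μ) (hgy : AEStronglyMeasurable[y] g μ) :
    AEStronglyMeasurable[x ⊓ y] g μ := by
  obtain ⟨g1, hg1, heq1⟩ := hgx
  obtain ⟨g2, hg2, heq2⟩ := hgy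
  have h12 : g1 =ᵐ[μ] g2 := heq1.symm.trans heq2
  have hN : μ {a | g1 a ≠ g2 a} = 0 := ae_iff.mp h12
  have hNy : MeasurableSet[y] {a | g1 a ≠ g2 a} :=
    hy2 _ (MeasurableSpace.measurableSet_generateFrom hN)
  have hg1y : Measurable[y] g1 := by
    intro A hA
    have hsub : μ (g1 ⁻¹' A ∩ {a | g1 a ≠ g2 a}) = 0 :=
      measure_mono_null Set.inter_subset_right hN
    have hkey : g1 ⁻¹' A =
        ((g2 ⁻¹' A) \ {a | g1 a ≠ g2 a}) ∪ (g1 ⁻¹' A ∩ {a | g1 a ≠ g2 a}) := by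
      ext ω
      simp only [Set.mem_union, Set.mem_diff, Set.mem_inter_iff, Set.mem_preimage,
        Set.mem_setOf_eq]
      by_cases hω : g1 ω = g2 ω
      · rw [hω]; tauto
      · tauto
    rw [hkey]
    exact ((hg2.measurable hA).diff hNy).union
      (hy2 _ (MeasurableSpace.measurableSet_generateFrom hsub))
  refine ⟨g1, ?_, heq1⟩
  have hmeas : Measurable[x ⊓ y] g1 := fun A hA =>
    MeasurableSpace.measurableSet_inf.mpr ⟨hg1.measurable hA, hg1y hA⟩
  exact hmeas.stronglyMeasurable

lemma comp_eq_Q0_of_commute [IsProbabilityMeasure μ] {x y : MeasurableSpace Ω}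
    (hx : InLam μ x) (hy : InLam μ y)
    (hc : (Q μ x).comp (Q μ y) = (Q μ y).comp (Q μ x)) (hi : x ⊓ y = nullSF μ) :
    (Q μ x).comp (Q μ y) = Q μ (nullSF μ) := by
  have h0 : nullSF μ ≤ m0 := hx.2.trans hx.1
  haveI : Fact (nullSF μ ≤ m0) := ⟨h0⟩
  refine ContinuousLinearMap.ext fun f => ?_
  have hmemx : AEStronglyMeasurable[x] (((Q μ x).comp (Q μ y)) f : Ω → ℝ) μ :=
    mem_lpMeas_iff_aestronglyMeasurable.mp (Q_mem hx.1 (Q μ y f))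
  have hmemy : AEStronglyMeasurable[y] (((Q μ x).comp (Q μ y)) f : Ω → ℝ) μ := by
    rw [hc]
    exact mem_lpMeas_iff_aestronglyMeasurable.mp (Q_mem hy.1 (Q μ x f))
  have hmem : ((Q μ x).comp (Q μ y)) f ∈ L2S μ (nullSF μ) := by
    rw [mem_lpMeas_iff_aestronglyMeasurable, ← hi]
    exact aesm_inf hy.2 hmemx hmemy
  have horth : ∀ w ∈ L2S μ (nullSF μ),
      (inner ℝ (f - ((Q μ x).comp (Q μ y)) f) w : ℝ) = 0 := by
    intro w hw
    have hwx : Q μ x w = w := Q_fix hx.1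
      (mem_lpMeas_iff_aestronglyMeasurable.mpr
        ((mem_lpMeas_iff_aestronglyMeasurable.mp hw).mono hx.2))
    have hwy : Q μ y w = w := Q_fix hy.1
      (mem_lpMeas_iff_aestronglyMeasurable.mpr
        ((mem_lpMeas_iff_aestronglyMeasurable.mp hw).mono hy.2))
    have hiw : (inner ℝ (((Q μ x).comp (Q μ y)) f) w : ℝ) = inner ℝ f w := by
      rw [ContinuousLinearMap.comp_apply, Q_inner hx.1, hwx, Q_inner hy.1, hwy]
    rw [inner_sub_left, hiw, sub_self]
  have hproj := Submodule.eq_starProjection_of_mem_of_inner_eq_zero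
    (K := L2S μ (nullSF μ)) hmem horth
  rw [Q_apply h0, condExpL2]
  exact hproj.symm

lemma inf_eq_nullSF [IsProbabilityMeasure μ] {x y : MeasurableSpace Ω}
    (hx : InLam μ x) (hy : InLam μ y) (h : IndepSF μ x y) : x ⊓ y = nullSF μ := by
  refine le_antisymm ?_ (le_inf hx.2 hy.2)
  intro s hs
  rcases MeasurableSpace.measurableSet_inf.mp hs with ⟨hsx, hsy⟩
  have h1 : μ s = μ s * μ s := by
    have := h s s hsx hsy
    rwa [Set.inter_self] at this
  by_cases h2 : μ s = 0
  · exact MeasurableSpace.measurableSet_generateFrom h2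
  · have h3 : μ s = 1 := (ENNReal.mul_eq_left h2 (measure_ne_top μ s)).mp h1.symm
    have hc : μ sᶜ = 0 := (prob_compl_eq_zero_iff (hx.1 s hsx)).mpr h3
    have := (MeasurableSpace.measurableSet_generateFrom
      (show sᶜ ∈ {u : Set Ω | μ u = 0} from hc)).compl
    rwa [compl_compl] at this

end Aux

/-- Two sub-σ-fields `x, y` are independent iff the projections `Q_x, Q_y` commute and
`x ∧ y` is the trivial σ-field; equivalently, iff `Q_x Q_y = Q_y Q_x = Q₀`. -/
theorem stmt11 {m0 : MeasurableSpace Ω} (μ : Measure Ω) [IsProbabilityMeasure μ]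
    (x y : MeasurableSpace Ω) (hx : InLam μ x) (hy : InLam μ y) :
    (IndepSF μ x y ↔
      ((Q μ x).comp (Q μ y) = (Q μ y).comp (Q μ x) ∧ x ⊓ y = nullSF μ)) ∧
    (IndepSF μ x y ↔
      ((Q μ x).comp (Q μ y) = Q μ (nullSF μ) ∧ (Q μ y).comp (Q μ x) = Q μ (nullSF μ))) := by
  have hsymm : IndepSF μ x y → IndepSF μ y x := fun h s t hs ht => by
    rw [Set.inter_comm, h t s ht hs, mul_comm]
  constructor
  · constructor
    · intro h
      refine ⟨?_, inf_eq_nullSF hx hy h⟩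
      rw [comp_eq_Q0 hx hy h, comp_eq_Q0 hy hx (hsymm h)]
    · rintro ⟨hc, hi⟩
      exact indep_of_comp_eq hx hy (comp_eq_Q0_of_commute hx hy hc hi)
  · constructor
    · intro h
      exact ⟨comp_eq_Q0 hx hy h, comp_eq_Q0 hy hx (hsymm h)⟩
    · rintro ⟨h1, _⟩
      exact indep_of_comp_eq hx hy h1
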